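/- Fix real constants ω, Ω, φ₀, θ₀ and set φ(t) = φ₀ + ωt and θ(t) = θ₀ + Ωt. Let x, y : ℝ → ℝ be functions such that for every t ∈ ℝ, x has derivative Ω·cos(φ(t)) at t and y has derivative Ω·sin(φ(t)) at t. Define the Lagrangian L̂ : ℝ⁴ × ℝ⁴ → ℝ by L̂((x, y, θ, φ), (vx, vy, vθ, vφ)) = (1/4)vθ² + (1/8)vφ² − (1/2)(vx² + vy²) + vθ(vx·cos φ + vy·sin φ). Then the curve γ(t) = (x(t), y(t), θ(t), φ(t)) satisfies the Euler–Lagrange equations of L̂: for each coordinate direction e of ℝ⁴ and each t ∈ ℝ, the function s ↦ D₂L̂(γ(s), γ'(s))(e) (the Fréchet derivative of L̂ in its velocity argument, applied to e) has derivative at t equal to D₁L̂(γ(t), γ'(t))(e) (the Fréchet derivative of L̂ in its position argument, applied to e). -/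

import Mathlib

/-- The quadratic Lagrangian `L̂` of [BFM] for the vertically rolling disk (M = R = 1),
in coordinates `(x, y, θ, φ) = (q 0, q 1, q 2, q 3)` and velocities
`(vx, vy, vθ, vφ) = (v 0, v 1, v 2, v 3)`. -/
noncomputable def Lhat (q v : Fin 4 → ℝ) : ℝ :=
  (1 / 4) * (v 2) ^ 2 + (1 / 8) * (v 3) ^ 2 - (1 / 2) * ((v 0) ^ 2 + (v 1) ^ 2)
    + v 2 * (v 0 * Real.cos (q 3) + v 1 * Real.sin (q 3))


lemma fderiv_Lhat_v (q v w : Fin 4 → ℝ) :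
    fderiv ℝ (fun v : Fin 4 → ℝ => Lhat q v) v w =
      (v 2 * Real.cos (q 3) - v 0) * w 0 + (v 2 * Real.sin (q 3) - v 1) * w 1
      + ((1 / 2) * v 2 + v 0 * Real.cos (q 3) + v 1 * Real.sin (q 3)) * w 2
      + (1 / 4 * v 3) * w 3 := by
  have h : ∀ j : Fin 4, HasFDerivAt (fun v : Fin 4 → ℝ => v j)
      (ContinuousLinearMap.proj j : (Fin 4 → ℝ) →L[ℝ] ℝ) v :=
    fun j => (ContinuousLinearMap.proj j : (Fin 4 → ℝ) →L[ℝ] ℝ).hasFDerivAt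
  have H := ((((((hasDerivAt_pow 2 (v 2)).comp_hasFDerivAt v (h 2)).const_mul ((1:ℝ)/4)).add
      (((hasDerivAt_pow 2 (v 3)).comp_hasFDerivAt v (h 3)).const_mul ((1:ℝ)/8))).sub
      ((((hasDerivAt_pow 2 (v 0)).comp_hasFDerivAt v (h 0)).add ((hasDerivAt_pow 2 (v 1)).comp_hasFDerivAt v (h 1))).const_mul ((1:ℝ)/2))).add
      ((h 2).mul (((h 0).mul_const (Real.cos (q 3))).add ((h 1).mul_const (Real.sin (q 3))))))
  have hF : HasFDerivAt (fun v : Fin 4 → ℝ => Lhat q v) _ v := H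
  rw [hF.fderiv]
  simp [ContinuousLinearMap.add_apply, ContinuousLinearMap.sub_apply,
    ContinuousLinearMap.smul_apply, ContinuousLinearMap.proj_apply, smul_eq_mul]
  ring

lemma fderiv_Lhat_q (q v w : Fin 4 → ℝ) :
    fderiv ℝ (fun q : Fin 4 → ℝ => Lhat q v) q w =
      v 2 * (v 1 * Real.cos (q 3) - v 0 * Real.sin (q 3)) * w 3 := by
  have h3 : HasFDerivAt (fun q : Fin 4 → ℝ => q 3)
      (ContinuousLinearMap.proj 3 : (Fin 4 → ℝ) →L[ℝ] ℝ) q :=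
    (ContinuousLinearMap.proj 3 : (Fin 4 → ℝ) →L[ℝ] ℝ).hasFDerivAt
  have hcos : HasFDerivAt (fun q : Fin 4 → ℝ => Real.cos (q 3))
      ((-Real.sin (q 3)) • (ContinuousLinearMap.proj 3 : (Fin 4 → ℝ) →L[ℝ] ℝ)) q :=
    (Real.hasDerivAt_cos (q 3)).comp_hasFDerivAt (f := fun q : Fin 4 → ℝ => q 3) q h3
  have hsin : HasFDerivAt (fun q : Fin 4 → ℝ => Real.sin (q 3))
      ((Real.cos (q 3)) • (ContinuousLinearMap.proj 3 : (Fin 4 → ℝ) →L[ℝ] ℝ)) q :=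
    (Real.hasDerivAt_sin (q 3)).comp_hasFDerivAt (f := fun q : Fin 4 → ℝ => q 3) q h3
  have H := ((((hcos.const_mul (v 0)).add (hsin.const_mul (v 1))).const_mul (v 2)).const_add
    ((1 / 4) * (v 2) ^ 2 + (1 / 8) * (v 3) ^ 2 - (1 / 2) * ((v 0) ^ 2 + (v 1) ^ 2)))
  have hF : HasFDerivAt (fun q : Fin 4 → ℝ => Lhat q v) _ q := H
  rw [hF.fderiv]
  simp [ContinuousLinearMap.add_apply, ContinuousLinearMap.smul_apply,
    ContinuousLinearMap.proj_apply, smul_eq_mul]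
  ring

/-- Section 8.1 of the paper: every nonholonomic trajectory of the vertically rolling
disk (constant `θ̇ = Ω`, constant `φ̇ = ω`, `ẋ = Ω cos φ`, `ẏ = Ω sin φ`) satisfies the
Euler–Lagrange equations of the quadratic Lagrangian `L̂`. -/
theorem rolling_disk_trajectory_satisfies_EL
    (ω Ω φ₀ θ₀ : ℝ) (x y : ℝ → ℝ)
    (hx : ∀ t : ℝ, HasDerivAt x (Ω * Real.cos (φ₀ + ω * t)) t)
    (hy : ∀ t : ℝ, HasDerivAt y (Ω * Real.sin (φ₀ + ω * t)) t)
    (γ γ' : ℝ → Fin 4 → ℝ)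
    (hγ : ∀ t : ℝ, γ t = ![x t, y t, θ₀ + Ω * t, φ₀ + ω * t])
    (hγ' : ∀ t : ℝ, HasDerivAt γ (γ' t) t) :
    ∀ (i : Fin 4) (t : ℝ),
      HasDerivAt
        (fun s : ℝ => (fderiv ℝ (fun v : Fin 4 → ℝ => Lhat (γ s) v) (γ' s)) (Pi.single i 1))
        ((fderiv ℝ (fun q : Fin 4 → ℝ => Lhat q (γ' t)) (γ t)) (Pi.single i 1)) t := by
  have key : ∀ s : ℝ, γ' s =
      ![Ω * Real.cos (φ₀ + ω * s), Ω * Real.sin (φ₀ + ω * s), Ω, ω] := by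
    intro s
    have hp : ∀ j : Fin 4, HasDerivAt (fun u => γ u j) (γ' s j) s :=
      (hasDerivAt_pi.1 (hγ' s))
    funext j
    fin_cases j
    · have h2 : HasDerivAt (fun u => γ u 0) (Ω * Real.cos (φ₀ + ω * s)) s := by
        have he : (fun u => γ u 0) = x := by funext u; rw [hγ u]; simp
        rw [he]; exact hx s
      simpa using (hp 0).unique h2
    · have h2 : HasDerivAt (fun u => γ u 1) (Ω * Real.sin (φ₀ + ω * s)) s := by
        have he : (fun u => γ u 1) = y := by funext u; rw [hγ u]; simp
        rw [he]; exact hy s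
      simpa using (hp 1).unique h2
    · have h2 : HasDerivAt (fun u => γ u 2) Ω s := by
        have he : (fun u => γ u 2) = fun u => θ₀ + Ω * u := by funext u; rw [hγ u]; simp
        rw [he]
        simpa using ((hasDerivAt_id s).const_mul Ω).const_add θ₀
      simpa using (hp 2).unique h2
    · have h2 : HasDerivAt (fun u => γ u 3) ω s := by
        have he : (fun u => γ u 3) = fun u => φ₀ + ω * u := by funext u; rw [hγ u]; simp
        rw [he]
        simpa using ((hasDerivAt_id s).const_mul ω).const_add φ₀
      simpa using (hp 3).unique h2
  intro i t
  have hRHS0 : (fderiv ℝ (fun q : Fin 4 → ℝ => Lhat q (γ' t)) (γ t)) (Pi.single i 1) = 0 := by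
    rw [fderiv_Lhat_q, key t, hγ t]
    simp only [Matrix.cons_val_zero, Matrix.cons_val_one, Matrix.cons_val_two,
      Matrix.cons_val_three, Matrix.head_cons, Matrix.tail_cons]
    ring_nf
  rw [hRHS0]
  have he : (fun s : ℝ =>
      (fderiv ℝ (fun v : Fin 4 → ℝ => Lhat (γ s) v) (γ' s)) (Pi.single i 1))
      = fun _ => (3 / 2 * Ω) * (Pi.single (M := fun _ : Fin 4 => ℝ) i 1 2)
          + (1 / 4 * ω) * (Pi.single (M := fun _ : Fin 4 => ℝ) i 1 3) := by
    funext s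
    rw [fderiv_Lhat_v, key s, hγ s]
    simp only [Matrix.cons_val_zero, Matrix.cons_val_one, Matrix.cons_val_two,
      Matrix.cons_val_three, Matrix.head_cons, Matrix.tail_cons]
    linear_combination (Ω * Pi.single (M := fun _ : Fin 4 => ℝ) i 1 2) *
      (Real.sin_sq_add_cos_sq (φ₀ + ω * s))
  rw [he]
  exact hasDerivAt_const t _
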